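/- Let b_n be a sequence of complex numbers in S_θ \ {0} with 0 ≤ θ < π/4, suppose M := sup_n |b_{2n}/b_{2n−1}| < ∞, and let C > 0 with C² ≥ M/cos(2θ). Then for every n and every w ∈ S_θ with |w| ≤ C, the even modified convergent f_{2n}(w) = 1/(b_1 + 1/(b_2 + ··· + 1/(b_{2n−1} + 1/(b_{2n} + w))···)) lies in S_θ and satisfies |f_{2n}(w)| ≤ C. -/

import Mathlib

open Real

/-- The finite continued fraction associated with the denominators `b`:
`F_0 = w`, `F_{k+1} = 1/(b (N - k) + F_k)`, so that
`F_N = 1/(b 1 + 1/(b 2 + ⋯ + 1/(b N + w)⋯))`. -/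
noncomputable def contFrac (N : ℕ) (b : ℕ → ℂ) (w : ℂ) : ℕ → ℂ :=
  Nat.rec w (fun k F => 1 / (b (N - k) + F))

lemma contFrac_zero (N : ℕ) (b : ℕ → ℂ) (w : ℂ) : contFrac N b w 0 = w := rfl

lemma contFrac_succ (N : ℕ) (b : ℕ → ℂ) (w : ℂ) (k : ℕ) :
    contFrac N b w (k + 1) = 1 / (b (N - k) + contFrac N b w k) := rfl

lemma contFrac_shift (N : ℕ) (b : ℕ → ℂ) (w : ℂ) (j : ℕ) :
    contFrac (N + 2) b w (j + 2)
      = contFrac N b (1 / (b (N + 1) + 1 / (b (N + 2) + w))) j := by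
  induction j with
  | zero =>
      rw [contFrac_succ, contFrac_succ, contFrac_zero, contFrac_zero]
      norm_num
  | succ j ih =>
      show contFrac (N + 2) b w ((j + 2) + 1) = _
      rw [contFrac_succ, ih, contFrac_succ,
        show N + 2 - (j + 2) = N - j from by omega]

/-- Characterization of the sector. -/
lemma sector_iff (θ : ℝ) (hθ0 : 0 ≤ θ) (hθ : θ < π / 2) (z : ℂ) :
    (z = 0 ∨ |z.arg| ≤ θ) ↔ ‖z‖ * Real.cos θ ≤ z.re := by
  have hπ : (0:ℝ) < π := Real.pi_pos
  have hcθ : 0 < Real.cos θ := Real.cos_pos_of_mem_Ioo ⟨by linarith, hθ⟩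
  constructor
  · rintro (rfl | h)
    · simp
    by_cases hz : z = 0
    · simp [hz, hcθ.le]
    have habs : 0 < ‖z‖ := norm_pos_iff.mpr hz
    have h1 : Real.cos z.arg = z.re / ‖z‖ := Complex.cos_arg hz
    have h2 : Real.cos θ ≤ Real.cos z.arg := by
      rw [← Real.cos_abs z.arg]
      exact Real.cos_le_cos_of_nonneg_of_le_pi (abs_nonneg _) (by linarith) h
    rw [h1] at h2
    calc ‖z‖ * Real.cos θ ≤ ‖z‖ * (z.re / ‖z‖) := by
          exact mul_le_mul_of_nonneg_left h2 habs.le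
      _ = z.re := by field_simp
  · intro h
    by_cases hz : z = 0
    · exact Or.inl hz
    right
    have habs : 0 < ‖z‖ := norm_pos_iff.mpr hz
    have h1 : Real.cos z.arg = z.re / ‖z‖ := Complex.cos_arg hz
    have h2 : Real.cos θ ≤ Real.cos |z.arg| := by
      rw [Real.cos_abs z.arg, h1]
      rw [le_div_iff₀ habs]
      linarith [h]
    by_contra hcon
    push_neg at hcon
    have := Real.cos_lt_cos_of_nonneg_of_le_pi hθ0 (Complex.abs_arg_le_pi z) hcon
    linarith

/-- Sum of two sector elements is in the sector. -/
lemma sector_add {θ : ℝ} (hcθ : 0 ≤ Real.cos θ) {z w : ℂ}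
    (hz : ‖z‖ * Real.cos θ ≤ z.re)
    (hw : ‖w‖ * Real.cos θ ≤ w.re) :
    ‖z + w‖ * Real.cos θ ≤ (z + w).re := by
  have := norm_add_le z w
  rw [Complex.add_re]
  nlinarith [norm_nonneg z, norm_nonneg w]

/-- Inverse of a nonzero sector element is in the sector. -/
lemma sector_inv {θ : ℝ} {z : ℂ} (hz0 : z ≠ 0)
    (hz : ‖z‖ * Real.cos θ ≤ z.re) :
    ‖z⁻¹‖ * Real.cos θ ≤ z⁻¹.re := by
  have habs : 0 < ‖z‖ := norm_pos_iff.mpr hz0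
  rw [norm_inv, Complex.inv_re, ← Complex.sq_norm]
  rw [le_div_iff₀ (by positivity)]
  have h : (‖z‖)⁻¹ * Real.cos θ * ‖z‖ ^ 2
      = ‖z‖ * Real.cos θ := by
    field_simp
  rw [h]
  exact hz

set_option maxHeartbeats 1000000 in
lemma step_lemma (θ C M : ℝ) (hθ0 : 0 ≤ θ) (hθ : θ < π / 4) (hC : 0 < C)
    (hC2 : M / Real.cos (2 * θ) ≤ C ^ 2)
    (a c w : ℂ) (ha0 : a ≠ 0) (hc0 : c ≠ 0)
    (ha : ‖a‖ * Real.cos θ ≤ a.re)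
    (hc : ‖c‖ * Real.cos θ ≤ c.re)
    (hMac : ‖c / a‖ ≤ M)
    (hw : ‖w‖ * Real.cos θ ≤ w.re) (hwC : ‖w‖ ≤ C) :
    ‖1 / (a + 1 / (c + w))‖ * Real.cos θ ≤ (1 / (a + 1 / (c + w))).re ∧
      ‖1 / (a + 1 / (c + w))‖ ≤ C := by
  have hπ := Real.pi_pos
  have hcθ : 0 < Real.cos θ := Real.cos_pos_of_mem_Ioo ⟨by linarith, by linarith⟩
  have hc2 : 0 < Real.cos (2 * θ) := Real.cos_pos_of_mem_Ioo ⟨by linarith, by linarith⟩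
  have hc21 : Real.cos (2 * θ) ≤ 1 := Real.cos_le_one _
  have hcθ1 : Real.cos θ ≤ 1 := Real.cos_le_one _
  have hX : 0 < ‖a‖ := norm_pos_iff.mpr ha0
  have hYpos : 0 < ‖c‖ := norm_pos_iff.mpr hc0
  have hcwre : 0 < (c + w).re := by
    rw [Complex.add_re]
    nlinarith only [hc, hw, mul_pos hYpos hcθ, mul_nonneg (norm_nonneg w) hcθ.le]
  have hcw0 : c + w ≠ 0 := fun h => by simp [h] at hcwre
  have hPcw := sector_add hcθ.le hc hw
  have hu0 : (c + w)⁻¹ ≠ 0 := inv_ne_zero hcw0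
  have hPu : ‖(c + w)⁻¹‖ * Real.cos θ ≤ ((c + w)⁻¹).re :=
    sector_inv hcw0 hPcw
  have hT : 0 < ‖(c + w)⁻¹‖ := norm_pos_iff.mpr hu0
  have hPau := sector_add hcθ.le ha hPu
  have haure : 0 < (a + (c + w)⁻¹).re := by
    rw [Complex.add_re]
    nlinarith only [ha, hPu, mul_pos hX hcθ, mul_nonneg (norm_nonneg (c + w)⁻¹) hcθ.le]
  have hau0 : a + (c + w)⁻¹ ≠ 0 := fun h => by simp [h] at haure
  have h1 : (1 : ℂ) / (a + 1 / (c + w)) = (a + (c + w)⁻¹)⁻¹ := by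
    rw [one_div, one_div]
  rw [h1]
  refine ⟨sector_inv hau0 hPau, ?_⟩
  -- facts proved at the complex level
  have hTb : 1 ≤ ‖(c + w)⁻¹‖ * (‖c‖ + C) := by
    have h2 : ‖c + w‖ ≤ ‖c‖ + C :=
      le_trans (norm_add_le c w) (by linarith)
    have hA' : 0 < ‖c + w‖ := norm_pos_iff.mpr hcw0
    rw [norm_inv, inv_mul_eq_div, one_le_div hA']
    exact h2
  have hYC : ‖c‖ ≤ C ^ 2 * Real.cos (2 * θ) * ‖a‖ := by
    rw [norm_div] at hMac
    rw [div_le_iff₀ hX] at hMac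
    rw [div_le_iff₀ hc2] at hC2
    nlinarith only [hMac, hC2, hX, mul_le_mul_of_nonneg_right hC2 hX.le]
  have ea : a.re ^ 2 + a.im ^ 2 = ‖a‖ ^ 2 := by
    rw [Complex.sq_norm, Complex.normSq_apply]; ring
  have eu : ((c + w)⁻¹).re ^ 2 + ((c + w)⁻¹).im ^ 2 = ‖(c + w)⁻¹‖ ^ 2 := by
    rw [Complex.sq_norm, Complex.normSq_apply]; ring
  have eau : (a.re + ((c + w)⁻¹).re) ^ 2 + (a.im + ((c + w)⁻¹).im) ^ 2
      = ‖a + (c + w)⁻¹‖ ^ 2 := by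
    rw [Complex.sq_norm, Complex.normSq_apply, Complex.add_re, Complex.add_im]; ring
  have hA0 : 0 < ‖a + (c + w)⁻¹‖ := norm_pos_iff.mpr hau0
  have hcos2 : Real.cos (2 * θ) = 2 * Real.cos θ ^ 2 - 1 := Real.cos_two_mul θ
  rw [norm_inv, inv_eq_one_div, div_le_iff₀ hA0]
  -- now pure real arithmetic
  set cθ := Real.cos θ with hcθdef
  set c2 := Real.cos (2 * θ) with hc2def
  set X := ‖a‖ with hXdef
  set T := ‖(c + w)⁻¹‖ with hTdef
  set Y := ‖c‖ with hYdef
  set A := ‖a + (c + w)⁻¹‖ with hAdef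
  set ar := a.re with har
  set ai := a.im with hai
  set ur := ((c + w)⁻¹).re with hur
  set ui := ((c + w)⁻¹).im with hui
  clear_value cθ c2 X T Y A ar ai ur ui
  clear hMac hC2 hw hwC hcwre hPcw hPau haure h1 ha0 hc0 hcw0 hu0 hau0
  have hare : 0 ≤ ar := le_trans (mul_nonneg hX.le hcθ.le) ha
  have hure : 0 ≤ ur := le_trans (mul_nonneg hT.le hcθ.le) hPu
  have him_a : ai ^ 2 ≤ X ^ 2 * (1 - cθ ^ 2) := by
    have h := mul_self_le_mul_self (mul_nonneg hX.le hcθ.le) ha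
    nlinarith only [ea, h]
  have him_u : ui ^ 2 ≤ T ^ 2 * (1 - cθ ^ 2) := by
    have h := mul_self_le_mul_self (mul_nonneg hT.le hcθ.le) hPu
    nlinarith only [eu, h]
  have hdot : X * T * c2 ≤ ar * ur + ai * ui := by
    have h1' : X * cθ * (T * cθ) ≤ ar * ur :=
      mul_le_mul ha hPu (mul_nonneg hT.le hcθ.le) hare
    have him : X * T * (cθ ^ 2 - 1) ≤ ai * ui := by
      have hsq := sq_nonneg (T * ai + X * ui)
      have e1 : T ^ 2 * ai ^ 2 ≤ T ^ 2 * (X ^ 2 * (1 - cθ ^ 2)) :=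
        mul_le_mul_of_nonneg_left him_a (sq_nonneg T)
      have e2 : X ^ 2 * ui ^ 2 ≤ X ^ 2 * (T ^ 2 * (1 - cθ ^ 2)) :=
        mul_le_mul_of_nonneg_left him_u (sq_nonneg X)
      have key : 2 * (X * T) * (X * T * (cθ ^ 2 - 1)) ≤ 2 * (X * T) * (ai * ui) := by
        nlinarith only [hsq, e1, e2]
      have hXT : 0 < 2 * (X * T) := by positivity
      exact le_of_mul_le_mul_left key hXT
    rw [hcos2]
    nlinarith only [h1', him]
  have hA2 : X ^ 2 + T ^ 2 + 2 * X * T * c2 ≤ A ^ 2 := by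
    nlinarith only [hdot, ea, eu, eau]
  -- final arithmetic
  have hYCC : Y + C ≤ C * (C * c2 * X + 1) := by nlinarith only [hYC]
  have hsCX : C * X ≤ X * (Y + C) := by
    nlinarith only [mul_pos hX hYpos]
  have hccX : C * c2 * X ≤ C * X := by
    nlinarith only [hc21, hc2, mul_pos hC hX]
  have hccs : C * c2 * X ≤ X * (Y + C) := le_trans hccX hsCX
  have k1 : (Y + C) ^ 2 ≤ C ^ 2 * ((X * (Y + C)) ^ 2 + 1 + 2 * (X * (Y + C)) * c2) := by
    have h1' : (Y + C) ^ 2 ≤ (C * (C * c2 * X + 1)) ^ 2 :=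
      pow_le_pow_left₀ (by positivity) hYCC 2
    have h2' : (C * c2 * X) ^ 2 ≤ (X * (Y + C)) ^ 2 :=
      pow_le_pow_left₀ (by positivity) hccs 2
    have h3' : c2 * (C * X) ≤ c2 * (X * (Y + C)) :=
      mul_le_mul_of_nonneg_left hsCX hc2.le
    nlinarith only [h1', h2', h3', hc2, sq_nonneg C]
  have k2 : C ^ 2 * ((X * (Y + C)) ^ 2 + 1 + 2 * (X * (Y + C)) * c2)
      ≤ C ^ 2 * ((Y + C) ^ 2 * (X ^ 2 + T ^ 2 + 2 * X * T * c2)) := by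
    have hTb2 : 1 ≤ (T * (Y + C)) ^ 2 := by nlinarith only [hTb]
    have h3' : 2 * (X * (Y + C)) * c2 * 1 ≤ 2 * (X * (Y + C)) * c2 * (T * (Y + C)) :=
      mul_le_mul_of_nonneg_left hTb (by positivity)
    have hmain : (X * (Y + C)) ^ 2 + 1 + 2 * (X * (Y + C)) * c2
        ≤ (Y + C) ^ 2 * (X ^ 2 + T ^ 2 + 2 * X * T * c2) := by
      nlinarith only [hTb2, h3']
    exact mul_le_mul_of_nonneg_left hmain (by positivity)
  have k3 : 1 ≤ C ^ 2 * (X ^ 2 + T ^ 2 + 2 * X * T * c2) := by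
    have h := k1.trans k2
    have hpos : (0:ℝ) < (Y + C) ^ 2 := by positivity
    have h' : (Y + C) ^ 2 * 1 ≤ (Y + C) ^ 2 * (C ^ 2 * (X ^ 2 + T ^ 2 + 2 * X * T * c2)) := by
      nlinarith only [h]
    exact le_of_mul_le_mul_left h' hpos
  have k4 : 1 ≤ C ^ 2 * A ^ 2 :=
    k3.trans (mul_le_mul_of_nonneg_left hA2 (by positivity))
  nlinarith only [mul_nonneg hC.le hA0.le, k4]

theorem even_convergents_in_disk_origin (θ : ℝ) (hθ0 : 0 ≤ θ) (hθ : θ < π / 4)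
    (b : ℕ → ℂ)
    (hb : ∀ n, 1 ≤ n → b n ≠ 0 ∧ |(b n).arg| ≤ θ)
    (M : ℝ)
    (hM : ∀ n, 1 ≤ n → ‖b (2 * n) / b (2 * n - 1)‖ ≤ M)
    (C : ℝ) (hC : 0 < C)
    (hC2 : M / Real.cos (2 * θ) ≤ C ^ 2) :
    ∀ n : ℕ, ∀ w : ℂ, (w = 0 ∨ |w.arg| ≤ θ) → ‖w‖ ≤ C →
      (contFrac (2 * n) b w (2 * n) = 0 ∨ |(contFrac (2 * n) b w (2 * n)).arg| ≤ θ) ∧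
        ‖contFrac (2 * n) b w (2 * n)‖ ≤ C := by
  intro n
  induction n with
  | zero =>
      intro w hw hwC
      exact ⟨hw, hwC⟩
  | succ n ih =>
      intro w hw hwC
      have hπ := Real.pi_pos
      have hθ2 : θ < π / 2 := by linarith
      set w' := 1 / (b (2 * n + 1) + 1 / (b (2 * n + 2) + w)) with hw'
      have hshift : contFrac (2 * (n + 1)) b w (2 * (n + 1))
          = contFrac (2 * n) b w' (2 * n) := by
        have h2 : 2 * (n + 1) = 2 * n + 2 := by ring
        rw [h2]
        exact contFrac_shift (2 * n) b w (2 * n)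
      rw [hshift]
      obtain ⟨ha0, haθ⟩ := hb (2 * n + 1) (by omega)
      obtain ⟨hc0, hcθ'⟩ := hb (2 * n + 2) (by omega)
      have hMn := hM (n + 1) (by omega)
      rw [show 2 * (n + 1) = 2 * n + 2 from by ring,
        show 2 * n + 2 - 1 = 2 * n + 1 from by omega] at hMn
      have ha := (sector_iff θ hθ0 hθ2 _).mp (Or.inr haθ)
      have hc := (sector_iff θ hθ0 hθ2 _).mp (Or.inr hcθ')
      have hwP := (sector_iff θ hθ0 hθ2 w).mp hw
      obtain ⟨hP, hB⟩ := step_lemma θ C M hθ0 hθ hC hC2 (b (2 * n + 1)) (b (2 * n + 2)) w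
        ha0 hc0 ha hc hMn hwP hwC
      exact ih w' ((sector_iff θ hθ0 hθ2 _).mpr hP) hB
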